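/- Let u ∈ M(N) be a rational symbol with denominator B(z) = ∏_{j=1}^N (1 − p_j z), |p_j| < 1, and let b(z) = ∏_{j=1}^N (z − conj(p_j))/(1 − p_j z) be the associated finite Blaschke product. Then ker H_u = b·L²_+. -/

import Mathlib

noncomputable section

open MeasureTheory Real AddCircle Polynomial
open scoped ComplexConjugate

instance : Fact (0 < 2 * π) := ⟨by positivity⟩

/-- The point of the unit circle in `ℂ` corresponding to `x ∈ ℝ/2πℤ`. -/
def circlePt (x : AddCircle (2 * π)) : ℂ := (AddCircle.toCircle x : ℂ)

/-- The finite Blaschke product `b(z) = ∏_j (z − conj(p_j))/(1 − p_j z)` on the circle. -/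
def blaschke {N : ℕ} (p : Fin N → ℂ) (x : AddCircle (2 * π)) : ℂ :=
  ∏ j, (circlePt x - conj (p j)) / (1 - p j * circlePt x)

/-! ### Auxiliary lemmas -/

lemma circlePt_ne_zero (x : AddCircle (2 * π)) : circlePt x ≠ 0 := Circle.coe_ne_zero _

lemma norm_circlePt (x : AddCircle (2 * π)) : ‖circlePt x‖ = 1 := Circle.norm_coe _

lemma conj_circlePt (x : AddCircle (2 * π)) : conj (circlePt x) = (circlePt x)⁻¹ := by
  rw [circlePt, ← Circle.coe_inv_eq_conj, Circle.coe_inv]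

lemma continuous_circlePt : Continuous circlePt :=
  continuous_induced_dom.comp continuous_toCircle

lemma continuous_evalc (P : Polynomial ℂ) : Continuous (fun x => P.eval (circlePt x)) :=
  P.continuous.comp continuous_circlePt

lemma fourier_nat_pow (k : ℕ) (x : AddCircle (2 * π)) :
    (fourier (k : ℤ) x : ℂ) = circlePt x ^ k := by
  induction k with
  | zero => simpa using fourier_zero
  | succ n ih =>
      push_cast
      rw [fourier_add, ih, pow_succ, fourier_one]
      rfl

lemma fourierCoeff_neg_nat (f : AddCircle (2 * π) → ℂ) (k : ℕ) :
    fourierCoeff f (-(k : ℤ)) = ∫ x, circlePt x ^ k * f x ∂haarAddCircle := by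
  simp only [fourierCoeff, neg_neg, smul_eq_mul, fourier_nat_pow]

lemma fourierCoeff_nat (f : AddCircle (2 * π) → ℂ) (k : ℕ) :
    fourierCoeff f (k : ℤ) = ∫ x, conj (circlePt x ^ k) * f x ∂haarAddCircle := by
  simp only [fourierCoeff, smul_eq_mul]
  congr 1; funext x
  rw [fourier_neg, fourier_nat_pow]

lemma eval_reflect' {n : ℕ} (q : Polynomial ℂ) (hq : q.natDegree ≤ n) {z : ℂ} (hz : z ≠ 0) :
    (reflect n q).eval z = z ^ n * q.eval z⁻¹ := by
  have hd : (reflect n q).natDegree < n + 1 := by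
    have h1 : (reflect n q).natDegree ≤ n := by
      apply Polynomial.natDegree_le_iff_coeff_eq_zero.mpr
      intro i hi
      rw [coeff_reflect, revAt_eq_self_of_lt hi]
      exact Polynomial.coeff_eq_zero_of_natDegree_lt (by omega)
    omega
  rw [Polynomial.eval_eq_sum_range' hd,
      Polynomial.eval_eq_sum_range' (show q.natDegree < n + 1 by omega), Finset.mul_sum]
  have key : ∀ i ∈ Finset.range (n + 1),
      (reflect n q).coeff i * z ^ i = q.coeff (n - i) * z ^ i := by
    intro i hi
    rw [coeff_reflect, revAt_le (by simpa using Nat.lt_succ_iff.mp (Finset.mem_range.mp hi))]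
  rw [Finset.sum_congr rfl key, ← Finset.sum_range_reflect (fun i => q.coeff (n - i) * z ^ i)]
  apply Finset.sum_congr rfl
  intro i hi
  have hin : i ≤ n := Nat.lt_succ_iff.mp (Finset.mem_range.mp hi)
  have : n - (n + 1 - 1 - i) = i := by omega
  rw [this]
  have hzp : z ^ n = z ^ (n - i) * z ^ i := by rw [← pow_add]; congr 1; omega
  rw [hzp]
  field_simp
  rw [show n + 1 - 1 - i = n - i by omega, one_div, inv_pow, mul_assoc _ (z ^ i),
    mul_inv_cancel₀ (pow_ne_zero _ hz), mul_one]

lemma isCoprime_X_sub_C' {q : Polynomial ℂ} {w : ℂ} (hq : q.eval w ≠ 0) :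
    IsCoprime q (X - C w) := by
  obtain ⟨s, hs⟩ := (X_sub_C_dvd_sub_C_eval (a := w) (p := q))
  refine ⟨C (q.eval w)⁻¹, -(C (q.eval w)⁻¹ * s), ?_⟩
  have hcc : C (q.eval w)⁻¹ * C (q.eval w) = 1 := by
    rw [← C_mul, inv_mul_cancel₀ hq, C_1]
  linear_combination C (q.eval w)⁻¹ * hs + hcc

lemma isCoprime_prod_linear {q : Polynomial ℂ} {n : ℕ} {w : Fin n → ℂ}
    (h : ∀ j, q.eval (w j) ≠ 0) : IsCoprime q (∏ j, (X - C (w j))) :=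
  IsCoprime.prod_right fun j _ => isCoprime_X_sub_C' (h j)

lemma no_common_root {q r : Polynomial ℂ} (hco : IsCoprime q r) {y : ℂ} (hq : q.eval y = 0)
    (hr : r.eval y = 0) : False := by
  obtain ⟨a, b, hab⟩ := hco
  have := congrArg (Polynomial.eval y) hab
  simp [hq, hr] at this

lemma eval_map_conj (A : Polynomial ℂ) (y : ℂ) :
    (A.map (starRingEnd ℂ)).eval (conj y) = conj (A.eval y) := by
  rw [eval_map, eval₂_hom]

lemma integrable_cont_mul {f : AddCircle (2 * π) → ℂ} (hf : Integrable f haarAddCircle)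
    {φ : AddCircle (2 * π) → ℂ} (hφ : Continuous φ) :
    Integrable (fun x => φ x * f x) haarAddCircle := by
  let Φ : C(AddCircle (2 * π), ℂ) := ⟨φ, hφ⟩
  exact hf.bdd_mul hφ.aestronglyMeasurable (Filter.Eventually.of_forall fun x => Φ.norm_coe_le_norm x)

lemma integrable_pow_poly_mul {f : AddCircle (2 * π) → ℂ} (hf : Integrable f haarAddCircle)
    (P : Polynomial ℂ) (k : ℕ) :
    Integrable (fun x => circlePt x ^ k * (P.eval (circlePt x) * f x)) haarAddCircle :=
  integrable_cont_mul (integrable_cont_mul hf (continuous_evalc P)) (continuous_circlePt.pow k)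

lemma integral_poly_absorb {F : AddCircle (2 * π) → ℂ} (hF : Integrable F haarAddCircle)
    (h0 : ∀ k : ℕ, 1 ≤ k → ∫ x, circlePt x ^ k * F x ∂haarAddCircle = 0)
    (P : Polynomial ℂ) :
    ∀ k : ℕ, 1 ≤ k → ∫ x, circlePt x ^ k * (P.eval (circlePt x) * F x) ∂haarAddCircle = 0 := by
  intro k hk
  have hfun : (fun x => circlePt x ^ k * (P.eval (circlePt x) * F x))
      = fun x => ∑ i ∈ Finset.range (P.natDegree + 1),
          P.coeff i * (circlePt x ^ (k + i) * F x) := by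
    funext x
    rw [Polynomial.eval_eq_sum_range, Finset.sum_mul, Finset.mul_sum]
    apply Finset.sum_congr rfl
    intro i _
    rw [pow_add]; ring
  rw [hfun, integral_finset_sum]
  · refine Finset.sum_eq_zero fun i _ => ?_
    rw [integral_const_mul, h0 (k + i) (by omega), mul_zero]
  · intro i _
    exact (integrable_cont_mul hF ((continuous_circlePt.pow (k + i)))).const_mul _

lemma crux {K : AddCircle (2 * π) → ℂ} (hK : Integrable K haarAddCircle)
    {P₁ P₂ D : Polynomial ℂ} (hco : IsCoprime P₁ D)
    (h1 : ∀ k : ℕ, 1 ≤ k →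
      ∫ x, circlePt x ^ k * (P₁.eval (circlePt x) * K x) ∂haarAddCircle = 0)
    (hD : ∀ k : ℕ, 1 ≤ k →
      ∫ x, circlePt x ^ k * (D.eval (circlePt x) * K x) ∂haarAddCircle = 0) :
    ∀ k : ℕ, 1 ≤ k →
      ∫ x, circlePt x ^ k * (P₂.eval (circlePt x) * K x) ∂haarAddCircle = 0 := by
  obtain ⟨a, c, habc⟩ := hco
  intro k hk
  have hfun : (fun x => circlePt x ^ k * (P₂.eval (circlePt x) * K x))
      = fun x => circlePt x ^ k * ((P₂ * a).eval (circlePt x) * (P₁.eval (circlePt x) * K x))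
        + circlePt x ^ k * ((P₂ * c).eval (circlePt x) * (D.eval (circlePt x) * K x)) := by
    funext x
    have he : a.eval (circlePt x) * P₁.eval (circlePt x)
        + c.eval (circlePt x) * D.eval (circlePt x) = 1 := by
      have := congrArg (Polynomial.eval (circlePt x)) habc
      simpa using this
    simp only [Polynomial.eval_mul]
    linear_combination (-(circlePt x ^ k * P₂.eval (circlePt x) * K x)) * he
  have hI1 := integrable_pow_poly_mul (integrable_cont_mul hK (continuous_evalc P₁)) (P₂ * a) k
  have hI2 := integrable_pow_poly_mul (integrable_cont_mul hK (continuous_evalc D)) (P₂ * c) k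
  rw [hfun, integral_add hI1 hI2,
    integral_poly_absorb (integrable_cont_mul hK (continuous_evalc P₁)) h1 _ k hk,
    integral_poly_absorb (integrable_cont_mul hK (continuous_evalc D)) hD _ k hk, add_zero]

/-- Let `u = A/B ∈ M(N)` with `B(z) = ∏_{j=1}^N (1 − p_j z)`,
`|p_j| < 1`, and let `b` be the associated Blaschke product. Then `ker H_u = b·L²_+`:
for `h ∈ L²_+`, `Π(u·conj h) = 0` iff `h = b·g` for some `g ∈ L²_+`. -/
theorem stmt18 (N : ℕ) (hN : 0 < N) (p : Fin N → ℂ) (hp : ∀ j, ‖p j‖ < 1)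
    (A : Polynomial ℂ) (hA : A ≠ 0) (hAdeg : A.natDegree ≤ N - 1)
    (hcop : IsCoprime A (∏ j, (1 - Polynomial.C (p j) * Polynomial.X)))
    (hdeg : A.natDegree = N - 1 ∨
      (∏ j, (1 - Polynomial.C (p j) * Polynomial.X)).natDegree = N)
    (u : AddCircle (2 * π) → ℂ)
    (hu : ∀ x, u x = A.eval (circlePt x) /
      (∏ j, (1 - Polynomial.C (p j) * Polynomial.X)).eval (circlePt x))
    (h : AddCircle (2 * π) → ℂ) (hh : MemLp h 2 haarAddCircle)
    (hhardy : ∀ n : ℤ, n < 0 → fourierCoeff h n = 0) :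
    (∀ n : ℤ, 0 ≤ n → fourierCoeff (fun x => u x * conj (h x)) n = 0) ↔
      ∃ g : AddCircle (2 * π) → ℂ, MemLp g 2 haarAddCircle ∧
        (∀ n : ℤ, n < 0 → fourierCoeff g n = 0) ∧
        h =ᵐ[haarAddCircle] fun x => blaschke p x * g x := by
  -- Notation
  set Bp : Polynomial ℂ := ∏ j, (1 - Polynomial.C (p j) * Polynomial.X) with hBp_def
  set Dp : Polynomial ℂ := ∏ j, (X - C (conj (p j))) with hDp_def
  set q : Polynomial ℂ := A.map (starRingEnd ℂ) with hq_def
  set Ah : Polynomial ℂ := reflect (N - 1) q with hAh_def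
  -- Nonvanishing on the circle
  have hBne : ∀ x, Bp.eval (circlePt x) ≠ 0 := by
    intro x
    rw [hBp_def]
    simp only [eval_prod, eval_sub, eval_one, eval_mul, eval_C, eval_X]
    refine Finset.prod_ne_zero_iff.mpr fun j _ => ?_
    intro hzero
    have h1 : (1 : ℂ) = p j * circlePt x := by linear_combination hzero
    have : (1 : ℝ) = ‖p j * circlePt x‖ := by rw [← h1]; simp
    rw [norm_mul, norm_circlePt, mul_one] at this
    exact absurd (hp j) (by rw [← this]; simp)
  have hDne : ∀ x, Dp.eval (circlePt x) ≠ 0 := by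
    intro x
    rw [hDp_def]
    simp only [eval_prod, eval_sub, eval_X, eval_C]
    refine Finset.prod_ne_zero_iff.mpr fun j _ => ?_
    intro hzero
    have h1 : circlePt x = conj (p j) := by linear_combination hzero
    have : (1 : ℝ) = ‖conj (p j)‖ := by rw [← h1, norm_circlePt]
    rw [RCLike.norm_conj] at this
    exact absurd (hp j) (by rw [← this]; simp)
  -- Conjugation identities on the circle
  have hcard : (Finset.univ : Finset (Fin N)).card = N := by simp
  have hconjB : ∀ x, conj (Bp.eval (circlePt x)) * circlePt x ^ N = Dp.eval (circlePt x) := by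
    intro x
    rw [hBp_def, hDp_def]
    simp only [eval_prod, eval_sub, eval_one, eval_mul, eval_C, eval_X, map_prod, map_sub,
      map_one, map_mul]
    rw [conj_circlePt]
    calc (∏ j, (1 - conj (p j) * (circlePt x)⁻¹)) * circlePt x ^ N
        = ∏ j, ((1 - conj (p j) * (circlePt x)⁻¹) * circlePt x) := by
          rw [Finset.prod_mul_distrib, Finset.prod_const, hcard]
      _ = ∏ j, (circlePt x - conj (p j)) := by
          refine Finset.prod_congr rfl fun j _ => ?_
          have hz := circlePt_ne_zero x
          field_simp
  have hconjD : ∀ x, conj (Dp.eval (circlePt x)) * circlePt x ^ N = Bp.eval (circlePt x) := by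
    intro x
    rw [hBp_def, hDp_def]
    simp only [eval_prod, eval_sub, eval_one, eval_mul, eval_C, eval_X, map_prod, map_sub,
      map_one, map_mul, Complex.conj_conj]
    rw [conj_circlePt]
    calc (∏ j, ((circlePt x)⁻¹ - p j)) * circlePt x ^ N
        = ∏ j, (((circlePt x)⁻¹ - p j) * circlePt x) := by
          rw [Finset.prod_mul_distrib, Finset.prod_const, hcard]
      _ = ∏ j, (1 - p j * circlePt x) := by
          refine Finset.prod_congr rfl fun j _ => ?_
          have hz := circlePt_ne_zero x
          field_simp
  -- the reflected polynomial evaluates via conjugation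
  have hqdeg : q.natDegree ≤ N - 1 := le_trans natDegree_map_le hAdeg
  have hAh_eval : ∀ x, Ah.eval (circlePt x)
      = circlePt x ^ (N - 1) * conj (A.eval (circlePt x)) := by
    intro x
    rw [hAh_def, eval_reflect' q hqdeg (circlePt_ne_zero x), ← conj_circlePt, hq_def,
      eval_map_conj]
  have hpowN : ∀ x, circlePt x ^ N = circlePt x * circlePt x ^ (N - 1) := by
    intro x
    conv_lhs => rw [show N = (N - 1) + 1 from (Nat.succ_pred_eq_of_pos hN).symm]
    rw [pow_succ]; ring
  -- conj of u
  have hconjU : ∀ x, conj (u x)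
      = circlePt x * (Ah.eval (circlePt x) * (Dp.eval (circlePt x))⁻¹) := by
    intro x
    have hz := circlePt_ne_zero x
    have hD := hDne x
    have hB := hBne x
    have hzn : circlePt x ^ (N - 1) ≠ 0 := pow_ne_zero _ hz
    have hzN : circlePt x ^ N ≠ 0 := pow_ne_zero _ hz
    have hBc : conj (Bp.eval (circlePt x)) ≠ 0 := by simpa using hB
    rw [hu x, map_div₀]
    have hAc : conj (A.eval (circlePt x))
        = Ah.eval (circlePt x) / circlePt x ^ (N - 1) := by
      rw [hAh_eval x, mul_comm, mul_div_assoc, div_self hzn, mul_one]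
    have hBcv : conj (Bp.eval (circlePt x)) = Dp.eval (circlePt x) / circlePt x ^ N := by
      rw [← hconjB x, mul_div_assoc, div_self hzN, mul_one]
    rw [hAc, hBcv, div_div_div_eq]
    rw [div_eq_iff (mul_ne_zero hzn hD)]
    rw [hpowN x]
    field_simp
  -- blaschke product identities
  have hblaschke : ∀ x, blaschke p x
      = Dp.eval (circlePt x) * (Bp.eval (circlePt x))⁻¹ := by
    intro x
    rw [blaschke, hBp_def, hDp_def]
    simp only [eval_prod, eval_sub, eval_X, eval_C, eval_one, eval_mul,
      Finset.prod_div_distrib]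
    rw [div_eq_mul_inv]
  have hconjb : ∀ x, conj (blaschke p x)
      = Bp.eval (circlePt x) * (Dp.eval (circlePt x))⁻¹ := by
    intro x
    have h1 := hconjD x
    have h2 := hconjB x
    have hzn : circlePt x ^ N ≠ 0 := pow_ne_zero _ (circlePt_ne_zero x)
    have hDc : conj (Dp.eval (circlePt x)) ≠ 0 := by simpa using hDne x
    rw [hblaschke x, map_mul, map_inv₀]
    rw [show conj (Dp.eval (circlePt x)) = Bp.eval (circlePt x) / circlePt x ^ N by
        field_simp [← h1]; exact h1,
      show conj (Bp.eval (circlePt x)) = Dp.eval (circlePt x) / circlePt x ^ N by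
        field_simp [← h2]; exact h2]
    field_simp
  have hbb : ∀ x, blaschke p x * conj (blaschke p x) = 1 := by
    intro x
    rw [hconjb x, hblaschke x]
    field_simp [hBne x, hDne x]
  -- the kernel function K
  set K : AddCircle (2 * π) → ℂ := fun x => (Dp.eval (circlePt x))⁻¹ * h x with hK_def
  have hh_int : Integrable h haarAddCircle := hh.integrable one_le_two
  have hK_int : Integrable K haarAddCircle :=
    integrable_cont_mul hh_int ((continuous_evalc Dp).inv₀ hDne)
  -- hhardy in integral form, with D absorbed
  have hSD : ∀ k : ℕ, 1 ≤ k →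
      ∫ x, circlePt x ^ k * (Dp.eval (circlePt x) * K x) ∂haarAddCircle = 0 := by
    intro k hk
    have heq : ∫ x, circlePt x ^ k * (Dp.eval (circlePt x) * K x) ∂haarAddCircle
        = ∫ x, circlePt x ^ k * h x ∂haarAddCircle := by
      refine integral_congr_ae (Filter.Eventually.of_forall fun x => ?_)
      rw [hK_def]
      simp only
      rw [← mul_assoc (Dp.eval (circlePt x)), mul_inv_cancel₀ (hDne x), one_mul]
    rw [heq, ← fourierCoeff_neg_nat]
    exact hhardy _ (by omega)
  -- coprimality facts
  have hBD : IsCoprime Bp Dp := by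
    rw [hDp_def]
    apply isCoprime_prod_linear
    intro j
    rw [hBp_def]
    simp only [eval_prod, eval_sub, eval_one, eval_mul, eval_C, eval_X]
    refine Finset.prod_ne_zero_iff.mpr fun i _ => ?_
    intro hzero
    have h1 : (1 : ℂ) = p i * conj (p j) := by linear_combination hzero
    have h2 : (1 : ℝ) = ‖p i * conj (p j)‖ := by rw [← h1]; simp
    rw [norm_mul, RCLike.norm_conj] at h2
    nlinarith [hp i, hp j, norm_nonneg (p i), norm_nonneg (p j)]
  have hAhD : IsCoprime Ah Dp := by
    rw [hDp_def]
    apply isCoprime_prod_linear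
    intro j
    by_cases hpj : p j = 0
    · rw [hpj, map_zero, ← coeff_zero_eq_eval_zero, hAh_def, coeff_reflect,
        revAt_le (Nat.zero_le _), Nat.sub_zero, hq_def, coeff_map]
      simp only [ne_eq, _root_.map_eq_zero]
      have hAN : A.natDegree = N - 1 := by
        rcases hdeg with h1 | h1
        · exact h1
        · exfalso
          have hdegle : Bp.natDegree ≤ ∑ i, ((1 : Polynomial ℂ)
              - Polynomial.C (p i) * Polynomial.X).natDegree := natDegree_prod_le _ _
          have hle1 : ∀ i, ((1 : Polynomial ℂ)
              - Polynomial.C (p i) * Polynomial.X).natDegree ≤ 1 := by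
            intro i
            refine (natDegree_sub_le _ _).trans ?_
            simp only [natDegree_one, max_le_iff]
            exact ⟨Nat.zero_le 1, (natDegree_C_mul_le _ _).trans (by simp)⟩
          have hj0 : ((1 : Polynomial ℂ) - Polynomial.C (p j) * Polynomial.X).natDegree = 0 := by
            rw [hpj]; simp
          have hsum : ∑ i, ((1 : Polynomial ℂ)
              - Polynomial.C (p i) * Polynomial.X).natDegree ≤ N - 1 := by
            rw [← Finset.sum_erase_add _ _ (Finset.mem_univ j), hj0, add_zero]
            refine le_trans (Finset.sum_le_sum (g := fun _ => 1) fun i _ => hle1 i) ?_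
            rw [Finset.sum_const, smul_eq_mul, mul_one,
              Finset.card_erase_of_mem (Finset.mem_univ j), hcard]
          omega
      rw [← hAN]
      exact fun hc => hA (leadingCoeff_eq_zero.mp (by rw [leadingCoeff]; exact hc))
    · have hw : conj (p j) ≠ 0 := by simpa using hpj
      rw [hAh_def, eval_reflect' q hqdeg hw]
      refine mul_ne_zero (pow_ne_zero _ hw) ?_
      rw [show (conj (p j))⁻¹ = conj ((p j)⁻¹) by rw [map_inv₀], hq_def, eval_map_conj]
      simp only [ne_eq, _root_.map_eq_zero]
      intro hroot
      refine no_common_root hcop hroot ?_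
      rw [hBp_def]
      simp only [eval_prod, eval_sub, eval_one, eval_mul, eval_C, eval_X]
      refine Finset.prod_eq_zero (Finset.mem_univ j) ?_
      rw [mul_inv_cancel₀ hpj, sub_self]
  -- the kernel condition in integral form
  have hkey : ∀ k : ℕ, conj (fourierCoeff (fun x => u x * conj (h x)) (k : ℤ))
      = ∫ x, circlePt x ^ (k + 1) * (Ah.eval (circlePt x) * K x) ∂haarAddCircle := by
    intro k
    rw [fourierCoeff_nat, ← integral_conj]
    refine integral_congr_ae (Filter.Eventually.of_forall fun x => ?_)
    simp only [map_mul, Complex.conj_conj]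
    rw [hconjU x, hK_def]
    simp only
    rw [pow_succ]
    ring
  have hSA_iff : (∀ n : ℤ, 0 ≤ n → fourierCoeff (fun x => u x * conj (h x)) n = 0)
      ↔ (∀ k : ℕ, 1 ≤ k →
        ∫ x, circlePt x ^ k * (Ah.eval (circlePt x) * K x) ∂haarAddCircle = 0) := by
    constructor
    · intro hker k hk
      have := hkey (k - 1)
      rw [Nat.sub_add_cancel hk] at this
      rw [← this, hker _ (by positivity), map_zero]
    · intro hSA n hn
      obtain ⟨k, rfl⟩ := Int.eq_ofNat_of_zero_le hn
      have := hkey k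
      rw [hSA (k + 1) (by omega)] at this
      simpa using congrArg conj this
  constructor
  · -- forward direction
    intro hker
    have hSA := hSA_iff.mp hker
    have hSB := crux (P₂ := Bp) hK_int hAhD hSA hSD
    refine ⟨fun x => conj (blaschke p x) * h x, ?_, ?_, ?_⟩
    · -- Memℒp
      have hbnorm : ∀ x, ‖blaschke p x‖ = 1 := by
        intro x
        have h2 : ‖blaschke p x‖ * ‖blaschke p x‖ = 1 := by
          have h1 := congrArg norm (hbb x)
          rwa [norm_mul, RCLike.norm_conj, norm_one] at h1
        rcases mul_self_eq_one_iff.mp h2 with h3 | h3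
        · exact h3
        · nlinarith [norm_nonneg (blaschke p x)]
      have hbcont : Continuous (blaschke p) := by
        have : (blaschke p) = fun x => Dp.eval (circlePt x) * (Bp.eval (circlePt x))⁻¹ :=
          funext hblaschke
        rw [this]
        exact (continuous_evalc Dp).mul ((continuous_evalc Bp).inv₀ hBne)
      refine MemLp.of_le hh ?_ (Filter.Eventually.of_forall fun x => ?_)
      · exact (Complex.continuous_conj.comp hbcont).aestronglyMeasurable.mul
          hh.aestronglyMeasurable
      · rw [norm_mul, RCLike.norm_conj, hbnorm x, one_mul]
    · -- Hardy condition for g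
      intro n hn
      have hk1 : 1 ≤ (-n).toNat := by omega
      have hn' : n = -(((-n).toNat : ℕ) : ℤ) := by omega
      rw [hn', fourierCoeff_neg_nat]
      have heq : ∫ x, circlePt x ^ (-n).toNat * (conj (blaschke p x) * h x) ∂haarAddCircle
          = ∫ x, circlePt x ^ (-n).toNat
              * (Bp.eval (circlePt x) * K x) ∂haarAddCircle := by
        refine integral_congr_ae (Filter.Eventually.of_forall fun x => ?_)
        beta_reduce
        rw [hconjb x, hK_def]
        simp only
        ring
      rw [heq]
      exact hSB _ hk1
    · -- h = b * g
      refine Filter.Eventually.of_forall fun x => ?_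
      simp only
      rw [← mul_assoc, hbb x, one_mul]
  · -- backward direction
    rintro ⟨g, hg, hghardy, hae⟩
    apply hSA_iff.mpr
    have hSB : ∀ k : ℕ, 1 ≤ k →
        ∫ x, circlePt x ^ k * (Bp.eval (circlePt x) * K x) ∂haarAddCircle = 0 := by
      intro k hk
      have heq : (fun x => circlePt x ^ k * (Bp.eval (circlePt x) * K x))
          =ᵐ[haarAddCircle] fun x => circlePt x ^ k * g x := by
        refine hae.mono fun x hx => ?_
        rw [hK_def]
        simp only
        have : Bp.eval (circlePt x) * ((Dp.eval (circlePt x))⁻¹ * h x)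
            = conj (blaschke p x) * h x := by
          rw [hconjb x]; ring
        have h2 : conj (blaschke p x) * (blaschke p x * g x) = g x := by
          rw [← mul_assoc, mul_comm (conj (blaschke p x)) (blaschke p x), hbb x, one_mul]
        rw [this, hx, h2]
      rw [integral_congr_ae heq, ← fourierCoeff_neg_nat]
      exact hghardy _ (by omega)
    exact crux (P₂ := Ah) hK_int hBD hSB hSD
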